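/- Let E be a Jordan Banach triple with Cohen's factorisation property: for every norm-null sequence (aₙ) in E there exist a norm-null sequence (bₙ) and elements x, y ∈ E with aₙ = {x, bₙ, y} for all n. Let T : E → F be a linear map into a Jordan Banach triple F such that for each a ∈ E the map x ↦ T({a,x,a}) is continuous. Then T is continuous. -/

import Mathlib

open Filter Topology

/-- A (real) Jordan Banach triple: a Banach space with a continuous triple
product, (real-)linear in each variable, symmetric in the outer variables and
satisfying the Jordan identity. -/
structure JordanBanachTriple (E : Type*) [NormedAddCommGroup E] [NormedSpace ℝ E] where
  tp : E → E → E → E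
  add_left : ∀ a a' b c, tp (a + a') b c = tp a b c + tp a' b c
  smul_left : ∀ (r : ℝ) a b c, tp (r • a) b c = r • tp a b c
  add_mid : ∀ a b b' c, tp a (b + b') c = tp a b c + tp a b' c
  smul_mid : ∀ (r : ℝ) a b c, tp a (r • b) c = r • tp a b c
  symm : ∀ a b c, tp a b c = tp c b a
  jordan : ∀ a b x y z,
    tp a b (tp x y z) = tp (tp a b x) y z - tp x (tp b a y) z + tp x y (tp a b z)
  bound : ∃ C > 0, ∀ a b c, ‖tp a b c‖ ≤ C * ‖a‖ * ‖b‖ * ‖c‖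

def sepSpace {X Y : Type*} [NormedAddCommGroup X] [NormedAddCommGroup Y]
    (T : X → Y) : Set Y :=
  {z | ∃ x : ℕ → X, Tendsto x atTop (𝓝 0) ∧ Tendsto (fun n => T (x n)) atTop (𝓝 z)}

/-- If `E` has Cohen's factorisation property and `x ↦ T {a,x,a}` is continuous
for every `a`, then `T` is continuous. -/
theorem stmt13 {E F : Type*}
    [NormedAddCommGroup E] [NormedSpace ℝ E] [CompleteSpace E]
    [NormedAddCommGroup F] [NormedSpace ℝ F] [CompleteSpace F]
    (JE : JordanBanachTriple E) (JF : JordanBanachTriple F)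
    (hCFP : ∀ a : ℕ → E, Tendsto a atTop (𝓝 0) →
      ∃ (b : ℕ → E) (x y : E), Tendsto b atTop (𝓝 0) ∧ ∀ n, a n = JE.tp x (b n) y)
    (T : E →ₗ[ℝ] F)
    (h : ∀ a : E, Continuous fun x => T (JE.tp a x a)) :
    Continuous T := by
  -- middle-variable is linear, so tp a 0 a = 0
  have tp0 : ∀ a : E, JE.tp a 0 a = 0 := by
    intro a
    have := JE.smul_mid 0 a 0 a
    simpa using this
  -- polarization: 2 • tp x b y = tp (x+y) b (x+y) - tp x b x - tp y b y
  have pol : ∀ x y b : E, (2 : ℝ) • JE.tp x b y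
      = JE.tp (x + y) b (x + y) - JE.tp x b x - JE.tp y b y := by
    intro x y b
    have h1 : JE.tp (x + y) b (x + y)
        = JE.tp x b x + JE.tp x b y + JE.tp x b y + JE.tp y b y := by
      rw [JE.add_left, JE.symm x b (x + y), JE.symm y b (x + y), JE.add_left, JE.add_left]
      rw [JE.symm y b x, JE.symm x b x]
      abel
    rw [h1, two_smul]; abel
  -- key: if b n → 0 then T (tp x (b n) y) → 0
  have key : ∀ (x y : E) (b : ℕ → E), Tendsto b atTop (𝓝 0) →
      Tendsto (fun n => T (JE.tp x (b n) y)) atTop (𝓝 0) := by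
    intro x y b hb
    have hterm : ∀ a : E, Tendsto (fun n => T (JE.tp a (b n) a)) atTop (𝓝 0) := by
      intro a
      have := ((h a).tendsto 0).comp hb
      simpa [tp0 a, Function.comp_def] using this
    have : Tendsto (fun n => T ((2 : ℝ) • JE.tp x (b n) y)) atTop (𝓝 0) := by
      have := ((hterm (x + y)).sub (hterm x)).sub (hterm y)
      simp only [pol x y, map_sub] at *
      simpa using this
    have h2 : Tendsto (fun n => (2 : ℝ)⁻¹ • T ((2 : ℝ) • JE.tp x (b n) y)) atTop (𝓝 0) := by
      simpa using this.const_smul ((2 : ℝ)⁻¹)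
    simpa [map_smul, smul_smul] using h2
  refine T.continuous_of_seq_closed_graph ?_
  intro u x y hu hTu
  have hnull : Tendsto (fun n => u n - x) atTop (𝓝 0) := by
    simpa using hu.sub (tendsto_const_nhds (x := x))
  obtain ⟨b, p, q, hb, hfac⟩ := hCFP _ hnull
  have hT0 : Tendsto (fun n => T (u n - x)) atTop (𝓝 0) := by
    have := key p q b hb
    simpa [← hfac] using this
  have : Tendsto (fun n => T (u n)) atTop (𝓝 (T x)) := by
    have := hT0.add (tendsto_const_nhds (x := T x))
    simpa [map_sub, sub_add_cancel] using this
  exact tendsto_nhds_unique hTu this
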